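/- Let K : ℝ → ℝ be a symmetric density supported on [-1,1] with zero first moment, and let f ∈ C²(ℝ) be a density supported on [a, ∞) with bounded second derivative. For x = a + c·h with c ∈ [0,1) fixed, the expected value of the KDE satisfies E[(1/h)K((x-X)/h)] = f(x)·F_K(c) - h·f'(x)·μ₁⁻(K;c) + O(h²) as h → 0, where F_K(c) = ∫_{-1}^{c} K(t)dt and μ₁⁻(K;c) = ∫_{-1}^{c} t·K(t)dt; in particular when F_K(c) < 1 the bias E[(1/h)K((x-X)/h)] - f(x) does not vanish as h → 0 unless f(x) = 0. -/

import Mathlib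

open MeasureTheory Filter Asymptotics

lemma stmt19_taylor {a M : ℝ} (f f' f'' : ℝ → ℝ)
    (hf' : ∀ x ∈ Set.Ici a, HasDerivWithinAt f (f' x) (Set.Ici a) x)
    (hf'' : ∀ x ∈ Set.Ici a, HasDerivWithinAt f' (f'' x) (Set.Ici a) x)
    (hM : ∀ x ∈ Set.Ici a, |f'' x| ≤ M)
    {x y : ℝ} (hx : a ≤ x) (hy : a ≤ y) :
    |f y - f x - f' x * (y - x)| ≤ M * (y - x) ^ 2 := by
  have hM0 : 0 ≤ M := le_trans (abs_nonneg _) (hM a Set.self_mem_Ici)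
  have hlip : ∀ s ∈ Set.Ici a, |f' s - f' x| ≤ M * |s - x| := by
    intro s hs
    have := (convex_Ici a).norm_image_sub_le_of_norm_hasDerivWithin_le hf''
      (fun z hz => by simpa [Real.norm_eq_abs] using hM z hz) hx hs
    simpa [Real.norm_eq_abs] using this
  set I : Set ℝ := Set.Icc (min x y) (max x y) with hI
  have hsub : I ⊆ Set.Ici a := fun s hs => le_trans (le_min hx hy) hs.1
  have hxI : x ∈ I := ⟨min_le_left _ _, le_max_left _ _⟩
  have hyI : y ∈ I := ⟨min_le_right _ _, le_max_right _ _⟩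
  have hgd : ∀ s ∈ I, HasDerivWithinAt (fun s => f s - f' x * s) (f' s - f' x) I s := by
    intro s hs
    have h1 : HasDerivWithinAt (fun s : ℝ => f' x * s) (f' x) (Set.Ici a) s := by
      simpa using (hasDerivWithinAt_id s (Set.Ici a)).const_mul (f' x)
    exact ((hf' s (hsub hs)).sub h1).mono hsub
  have hbound : ∀ s ∈ I, ‖f' s - f' x‖ ≤ M * |y - x| := by
    intro s hs
    obtain ⟨hs1, hs2⟩ := hs
    have h2 : |s - x| ≤ |y - x| := by
      rw [abs_le]
      constructor
      · have : x - |y - x| ≤ min x y :=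
          le_min (by linarith [abs_nonneg (y - x)]) (by linarith [neg_abs_le (y - x)])
        linarith
      · have : max x y ≤ x + |y - x| :=
          max_le (by linarith [abs_nonneg (y - x)]) (by linarith [le_abs_self (y - x)])
        linarith
    calc ‖f' s - f' x‖ = |f' s - f' x| := Real.norm_eq_abs _
      _ ≤ M * |s - x| := hlip s (hsub ⟨hs1, hs2⟩)
      _ ≤ M * |y - x| := mul_le_mul_of_nonneg_left h2 hM0
  have key := (convex_Icc _ _).norm_image_sub_le_of_norm_hasDerivWithin_le hgd hbound hxI hyI
  rw [Real.norm_eq_abs, Real.norm_eq_abs] at key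
  have e : f y - f' x * y - (f x - f' x * x) = f y - f x - f' x * (y - x) := by ring
  rw [e] at key
  calc |f y - f x - f' x * (y - x)| ≤ M * |y - x| * |y - x| := key
    _ = M * (y - x) ^ 2 := by rw [mul_assoc, ← sq_abs]; ring

lemma stmt19_cov {a c : ℝ} {h : ℝ} (hh : 0 < h)
    (K f : ℝ → ℝ) (hK_supp : ∀ t, t ∉ Set.Icc (-1:ℝ) 1 → K t = 0)
    (hf_supp : ∀ u, u < a → f u = 0) :
    (∫ u in Set.Ioi a, (1 / h) * K ((a + c * h - u) / h) * f u)
      = ∫ t in Set.Icc (-1:ℝ) c, K t * f (a + c * h - h * t) := by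
  have hne : h ≠ 0 := ne_of_gt hh
  set x := a + c * h with hx
  set g : ℝ → ℝ := fun u => (1 / h) * K ((x - u) / h) * f u with hg
  have step1 : (∫ u in Set.Ioi a, g u) = ∫ u, g u := by
    rw [← integral_Ici_eq_integral_Ioi]
    refine setIntegral_eq_integral_of_forall_compl_eq_zero fun u hu => ?_
    have : u < a := lt_of_not_ge hu
    simp [hg, hf_supp u this]
  have step2 : (∫ u, g u) = ∫ t : ℝ, K t * f (x - h * t) := by
    have e1 : (fun t : ℝ => K t * f (x - h * t))
        = fun t : ℝ => h * ((fun s => g (x - s)) (h * t)) := by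
      funext t
      have : (x - (x - h * t)) / h = t := by field_simp; ring
      simp only [hg, this]
      field_simp
    rw [e1, integral_const_mul, Measure.integral_comp_mul_left (fun s => g (x - s)) h,
      integral_sub_left_eq_self g volume x, abs_of_pos (inv_pos.mpr hh), smul_eq_mul]
    field_simp
  have step3 : (∫ t : ℝ, K t * f (x - h * t))
      = ∫ t in Set.Icc (-1:ℝ) c, K t * f (x - h * t) := by
    refine (setIntegral_eq_integral_of_forall_compl_eq_zero fun t ht => ?_).symm
    by_cases h1 : t ∈ Set.Icc (-1:ℝ) 1
    · have htc : c < t := by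
        by_contra hcon
        exact ht ⟨h1.1, le_of_not_gt hcon⟩
      have : x - h * t < a := by nlinarith
      simp [hf_supp _ this]
    · simp [hK_supp t h1]
  rw [step1, step2, step3]

/-- Boundary bias of KDE. Let `K` be a symmetric density supported on
`[-1,1]` with zero first moment, and let `f` be a density supported on `[a, ∞)` that is
C² on `[a, ∞)` (with one-sided derivatives `f'`, `f''`) with `f, f', f''` bounded. For
`x = a + c·h` with fixed `c ∈ [0,1)`, the KDE expectation
`E[(1/h)K((x-X)/h)] = ∫_a^∞ (1/h)K((x-u)/h) f(u) du` satisfies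
`E = f(x)·F_K(c) - h·f'(x)·μ₁⁻(K;c) + O(h²)` as `h → 0⁺`, where
`F_K(c) = ∫_{-1}^c K` and `μ₁⁻(K;c) = ∫_{-1}^c t·K(t) dt`; in particular, if
`F_K(c) < 1` and `f(a) ≠ 0`, the bias `E - f(x)` does not vanish as `h → 0⁺`. -/
theorem stmt19 (a c : ℝ) (hc : c ∈ Set.Ico (0 : ℝ) 1)
    (K : ℝ → ℝ) (hK_meas : Measurable K) (hK_nonneg : ∀ t, 0 ≤ K t)
    (hK_symm : ∀ t, K (-t) = K t)
    (hK_supp : ∀ t, t ∉ Set.Icc (-1 : ℝ) 1 → K t = 0)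
    (hK_int : Integrable K) (hK_norm : ∫ t, K t = 1)
    (hK_mom1 : ∫ t, t * K t = 0)
    (f f' f'' : ℝ → ℝ) (hf_meas : Measurable f) (hf_nonneg : ∀ u, 0 ≤ f u)
    (hf_int : Integrable f) (hf_norm : ∫ u, f u = 1)
    (hf_supp : ∀ u, u < a → f u = 0)
    (hf' : ∀ x ∈ Set.Ici a, HasDerivWithinAt f (f' x) (Set.Ici a) x)
    (hf'' : ∀ x ∈ Set.Ici a, HasDerivWithinAt f' (f'' x) (Set.Ici a) x)
    (hf''_cont : ContinuousOn f'' (Set.Ici a))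
    (hbdd : ∃ M, ∀ x ∈ Set.Ici a, |f x| ≤ M ∧ |f' x| ≤ M ∧ |f'' x| ≤ M) :
    ((fun h : ℝ =>
        (∫ u in Set.Ioi a, (1 / h) * K ((a + c * h - u) / h) * f u)
          - f (a + c * h) * (∫ t in Set.Icc (-1 : ℝ) c, K t)
          + h * f' (a + c * h) * (∫ t in Set.Icc (-1 : ℝ) c, t * K t))
      =O[nhdsWithin 0 (Set.Ioi 0)] fun h : ℝ => h ^ 2) ∧
    ((∫ t in Set.Icc (-1 : ℝ) c, K t) < 1 → f a ≠ 0 →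
      ¬ Tendsto
          (fun h : ℝ =>
            (∫ u in Set.Ioi a, (1 / h) * K ((a + c * h - u) / h) * f u)
              - f (a + c * h))
          (nhdsWithin 0 (Set.Ioi 0)) (nhds 0)) := by
  obtain ⟨M, hM⟩ := hbdd
  have hM0 : 0 ≤ M := le_trans (abs_nonneg _) (hM a Set.self_mem_Ici).1
  have hfle : ∀ y : ℝ, f y ≤ M := by
    intro y
    by_cases hy : a ≤ y
    · exact le_trans (le_abs_self _) (hM y hy).1
    · rw [hf_supp y (lt_of_not_ge hy)]; exact hM0
  -- integrability of t * K t
  have htK_int : Integrable (fun t : ℝ => t * K t) := by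
    refine hK_int.mono' ((measurable_id.mul hK_meas).aestronglyMeasurable) (ae_of_all _ fun t => ?_)
    by_cases h1 : t ∈ Set.Icc (-1:ℝ) 1
    · rw [Real.norm_eq_abs, abs_mul]
      calc |t| * |K t| ≤ 1 * |K t| := by
            refine mul_le_mul_of_nonneg_right ?_ (abs_nonneg _)
            rw [abs_le]; exact ⟨h1.1, h1.2⟩
        _ = K t := by rw [one_mul, abs_of_nonneg (hK_nonneg t)]
    · simp [hK_supp t h1, hK_nonneg t]
  -- key eventual identity and bound
  have hkey : ∀ h : ℝ, 0 < h →
      ‖(∫ u in Set.Ioi a, (1 / h) * K ((a + c * h - u) / h) * f u)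
          - f (a + c * h) * (∫ t in Set.Icc (-1 : ℝ) c, K t)
          + h * f' (a + c * h) * (∫ t in Set.Icc (-1 : ℝ) c, t * K t)‖ ≤ M * ‖h ^ 2‖ := by
    intro h hh
    set x := a + c * h with hxdef
    have hax : a ≤ x := by nlinarith [hc.1]
    have hcov := stmt19_cov (c := c) hh K f hK_supp hf_supp
    -- integrability on Icc
    have i1 : IntegrableOn (fun t : ℝ => K t * f (x - h * t)) (Set.Icc (-1:ℝ) c) := by
      refine Integrable.integrableOn ?_
      refine (hK_int.const_mul M).mono'
        ((hK_meas.mul (hf_meas.comp (measurable_const.sub (measurable_id.const_mul h)))).aestronglyMeasurable)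
        (ae_of_all _ fun t => ?_)
      rw [Real.norm_eq_abs, abs_mul, abs_of_nonneg (hK_nonneg t), abs_of_nonneg (hf_nonneg _)]
      calc K t * f (x - h * t) ≤ K t * M := mul_le_mul_of_nonneg_left (hfle _) (hK_nonneg t)
        _ = M * K t := mul_comm _ _
    have i2 : IntegrableOn K (Set.Icc (-1:ℝ) c) := hK_int.integrableOn
    have i3 : IntegrableOn (fun t : ℝ => t * K t) (Set.Icc (-1:ℝ) c) := htK_int.integrableOn
    have heq : (∫ t in Set.Icc (-1:ℝ) c,
            K t * (f (x - h * t) - f x - f' x * ((x - h * t) - x)))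
        = (∫ u in Set.Ioi a, (1 / h) * K ((a + c * h - u) / h) * f u)
          - f x * (∫ t in Set.Icc (-1 : ℝ) c, K t)
          + h * f' x * (∫ t in Set.Icc (-1 : ℝ) c, t * K t) := by
      rw [hcov]
      have e2 : (fun t => K t * (f (x - h * t) - f x - f' x * ((x - h * t) - x)))
          = fun t => (K t * f (x - h * t) - f x * K t) + (h * f' x) * (t * K t) := by
        funext t; ring
      have i12 : IntegrableOn (fun t : ℝ => K t * f (x - h * t) - f x * K t)
          (Set.Icc (-1:ℝ) c) := i1.sub (i2.const_mul (f x))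
      rw [e2, integral_add i12 (i3.const_mul (h * f' x)),
        integral_sub i1 (i2.const_mul (f x)), integral_const_mul, integral_const_mul]
    rw [← heq]
    have hb : ‖∫ t in Set.Icc (-1:ℝ) c,
        K t * (f (x - h * t) - f x - f' x * ((x - h * t) - x))‖
        ≤ ∫ t in Set.Icc (-1:ℝ) c, (M * h ^ 2) * K t := by
      refine norm_integral_le_of_norm_le ((hK_int.const_mul (M * h ^ 2)).integrableOn) ?_
      refine (ae_restrict_iff' measurableSet_Icc).2 (ae_of_all _ fun t ht => ?_)
      have hay : a ≤ x - h * t := by nlinarith [ht.2, hc.1]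
      have htay := stmt19_taylor f f' f'' hf' hf'' (fun z hz => (hM z hz).2.2) hax hay
      rw [Real.norm_eq_abs, abs_mul, abs_of_nonneg (hK_nonneg t)]
      have ht2 : ((x - h * t) - x) ^ 2 ≤ h ^ 2 := by
        have h1 : t ^ 2 ≤ 1 := by nlinarith [ht.1, ht.2, hc.2]
        have : ((x - h * t) - x) ^ 2 = h ^ 2 * t ^ 2 := by ring
        nlinarith
      calc K t * |f (x - h * t) - f x - f' x * ((x - h * t) - x)|
          ≤ K t * (M * ((x - h * t) - x) ^ 2) :=
            mul_le_mul_of_nonneg_left htay (hK_nonneg t)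
        _ ≤ K t * (M * h ^ 2) :=
            mul_le_mul_of_nonneg_left (mul_le_mul_of_nonneg_left ht2 hM0) (hK_nonneg t)
        _ = (M * h ^ 2) * K t := mul_comm _ _
    refine le_trans hb ?_
    rw [integral_const_mul]
    have hsle : (∫ t in Set.Icc (-1:ℝ) c, K t) ≤ 1 := by
      rw [← hK_norm]
      exact setIntegral_le_integral hK_int (ae_of_all _ hK_nonneg)
    have : M * h ^ 2 * (∫ t in Set.Icc (-1:ℝ) c, K t) ≤ M * h ^ 2 * 1 := by
      refine mul_le_mul_of_nonneg_left hsle (by positivity)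
    rw [Real.norm_eq_abs, abs_of_nonneg (by positivity : (0:ℝ) ≤ h ^ 2)]
    nlinarith
  have part1 : (fun h : ℝ =>
        (∫ u in Set.Ioi a, (1 / h) * K ((a + c * h - u) / h) * f u)
          - f (a + c * h) * (∫ t in Set.Icc (-1 : ℝ) c, K t)
          + h * f' (a + c * h) * (∫ t in Set.Icc (-1 : ℝ) c, t * K t))
      =O[nhdsWithin 0 (Set.Ioi 0)] fun h : ℝ => h ^ 2 := by
    rw [isBigO_iff]
    refine ⟨M, ?_⟩
    filter_upwards [self_mem_nhdsWithin] with h hh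
    exact hkey h hh
  refine ⟨part1, ?_⟩
  intro hF hfa hten
  set F := ∫ t in Set.Icc (-1:ℝ) c, K t with hFdef
  set μ₁ := ∫ t in Set.Icc (-1:ℝ) c, t * K t with hmdef
  set l := nhdsWithin (0:ℝ) (Set.Ioi 0) with hldef
  have hx_tend : Tendsto (fun h : ℝ => a + c * h) l (nhdsWithin a (Set.Ici a)) := by
    rw [tendsto_nhdsWithin_iff]
    constructor
    · have : Tendsto (fun h : ℝ => a + c * h) (nhds 0) (nhds (a + c * 0)) :=
        (continuous_const.add (continuous_const.mul continuous_id)).tendsto 0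
      simpa using this.mono_left nhdsWithin_le_nhds
    · filter_upwards [self_mem_nhdsWithin] with h hh
      have : (0:ℝ) < h := hh
      simp only [Set.mem_Ici]
      nlinarith [hc.1]
  have hfx : Tendsto (fun h : ℝ => f (a + c * h)) l (nhds (f a)) :=
    ((hf' a Set.self_mem_Ici).continuousWithinAt).tendsto.comp hx_tend
  have hsq : Tendsto (fun h : ℝ => h ^ 2) l (nhds 0) := by
    have : Tendsto (fun h : ℝ => h ^ 2) (nhds 0) (nhds ((0:ℝ) ^ 2)) :=
      (continuous_pow 2).tendsto 0
    simpa using this.mono_left nhdsWithin_le_nhds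
  have h1 := part1.trans_tendsto hsq
  have h2 : Tendsto (fun h : ℝ => h * f' (a + c * h) * μ₁) l (nhds 0) := by
    refine squeeze_zero_norm' (a := fun h : ℝ => M * |μ₁| * |h|) ?_ ?_
    · filter_upwards [self_mem_nhdsWithin] with h hh
      have hh' : (0:ℝ) < h := hh
      have hax : a ≤ a + c * h := by nlinarith [hc.1]
      rw [Real.norm_eq_abs, abs_mul, abs_mul]
      calc |h| * |f' (a + c * h)| * |μ₁| ≤ |h| * M * |μ₁| := by
            refine mul_le_mul_of_nonneg_right
              (mul_le_mul_of_nonneg_left (hM _ hax).2.1 (abs_nonneg _)) (abs_nonneg _)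
        _ = M * |μ₁| * |h| := by ring
    · have : Tendsto (fun h : ℝ => M * |μ₁| * |h|) (nhds 0) (nhds (M * |μ₁| * |(0:ℝ)|)) :=
        (continuous_const.mul continuous_abs).tendsto 0
      simpa using this.mono_left nhdsWithin_le_nhds
  have hE : Tendsto (fun h : ℝ =>
      ∫ u in Set.Ioi a, (1 / h) * K ((a + c * h - u) / h) * f u) l (nhds (f a * F)) := by
    have := (h1.add (hfx.mul_const F)).sub h2
    simp only [zero_add, zero_sub] at this
    refine Tendsto.congr (fun h => by ring) this |>.congr' ?_ |>.mono_right ?_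
    · exact Filter.Eventually.of_forall fun h => by ring
    · simp
  have hbias : Tendsto (fun h : ℝ =>
      (∫ u in Set.Ioi a, (1 / h) * K ((a + c * h - u) / h) * f u) - f (a + c * h)) l
      (nhds (f a * F - f a)) := hE.sub hfx
  have huniq : (0 : ℝ) = f a * F - f a := tendsto_nhds_unique hten hbias
  have : f a * (F - 1) = 0 := by linarith [huniq]
  rcases mul_eq_zero.mp this with h0 | h0
  · exact hfa h0
  · have : F = 1 := by linarith
    rw [this] at hF
    exact lt_irrefl _ hF
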